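/- Let p and q be distinct primes. A finite group G has a p-nilpotent Hall {p,q}-subgroup if and only if there exist a Sylow p-subgroup P and a Sylow q-subgroup Q of G such that P normalizes Q. -/

import Mathlib

/-- `H` is a Hall `π`-subgroup: its order is a `π`-number and its index is a `π'`-number. -/
def IsHallSubgroup {G : Type*} [Group G] (π : Set ℕ) (H : Subgroup G) : Prop :=
  (∀ r : ℕ, r.Prime → r ∣ Nat.card H → r ∈ π) ∧
  (∀ r : ℕ, r.Prime → r ∣ H.index → r ∉ π)

/-- A group is `p`-nilpotent if it has a normal `p`-complement. -/
def IsPNilpotent (p : ℕ) (G : Type*) [Group G] : Prop :=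
  ∃ K : Subgroup G, K.Normal ∧ Nat.Coprime (Nat.card K) p ∧ ∃ n : ℕ, K.index = p ^ n

private lemma le_normalizer_map_of_normal {G : Type*} [Group G] {H : Subgroup G}
    {K : Subgroup ↥H} (hK : K.Normal) : H ≤ Subgroup.normalizer ((K.map H.subtype : Subgroup G) : Set G) := by
  intro h hh
  rw [Subgroup.mem_normalizer_iff]
  intro x
  simp only [Subgroup.mem_map, Subgroup.coe_subtype]
  constructor
  · rintro ⟨k, hk, rfl⟩
    exact ⟨⟨h, hh⟩ * k * ⟨h, hh⟩⁻¹, hK.conj_mem k hk ⟨h, hh⟩, rfl⟩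
  · rintro ⟨k, hk, hx⟩
    refine ⟨⟨h, hh⟩⁻¹ * k * ⟨h, hh⟩⁻¹⁻¹, hK.conj_mem k hk ⟨h, hh⟩⁻¹, ?_⟩
    have hxk : (k : G) = h * x * h⁻¹ := hx
    push_cast
    rw [hxk]
    group

theorem stmt2 {G : Type*} [Group G] [Finite G] (p q : ℕ) [Fact p.Prime] [Fact q.Prime]
    (hpq : p ≠ q) :
    (∃ H : Subgroup G, IsHallSubgroup {p, q} H ∧ IsPNilpotent p ↥H) ↔
      ∃ (P : Sylow p G) (Q : Sylow q G),
        (P : Subgroup G) ≤ Subgroup.normalizer ((Q : Subgroup G) : Set G) := by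
  have hp : p.Prime := Fact.out
  have hq : q.Prime := Fact.out
  constructor
  · rintro ⟨H, ⟨hord, hind⟩, K, hKn, hKcop, n, hKidx⟩
    have hpK : ¬ p ∣ Nat.card K := (hp.coprime_iff_not_dvd).mp hKcop.symm
    have hKcard_dvd : Nat.card K ∣ Nat.card H := ⟨K.index, (Subgroup.card_mul_index K).symm⟩
    have hKq : ∀ {r : ℕ}, r.Prime → r ∣ Nat.card K → r = q := by
      intro r hr hrd
      rcases hord r hr (hrd.trans hKcard_dvd) with h | h
      · exact absurd (h ▸ hrd) hpK
      · exact h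
    have hK0 : Nat.card K ≠ 0 := Nat.card_pos.ne'
    obtain ⟨m, hm⟩ : ∃ m, Nat.card K = q ^ m :=
      ⟨_, Nat.eq_prime_pow_of_unique_prime_dvd hK0 (fun hd hdvd => hKq hd hdvd)⟩
    set K' : Subgroup G := K.map H.subtype with hK'def
    have hK'card : Nat.card K' = Nat.card K :=
      (Nat.card_congr (K.equivMapOfInjective H.subtype (Subgroup.subtype_injective H)).toEquiv).symm
    have hK'le : K' ≤ H := Subgroup.map_subtype_le K
    have hsub : K'.subgroupOf H = K :=
      Subgroup.comap_map_eq_self_of_injective (Subgroup.subtype_injective H) K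
    have hidx : K'.index = p ^ n * H.index := by
      rw [← Subgroup.relIndex_mul_index hK'le]
      congr 1
      show (K'.subgroupOf H).index = p ^ n
      rw [hsub, hKidx]
    have hqK' : ¬ q ∣ K'.index := by
      rw [hidx]
      rintro hdvd
      rcases hq.dvd_mul.mp hdvd with h | h
      · exact hpq ((Nat.prime_dvd_prime_iff_eq hq hp).mp (hq.dvd_of_dvd_pow h)).symm
      · exact hind q hq h (by simp)
    have hK'pg : IsPGroup q K' := IsPGroup.of_card (hK'card.trans hm)
    let Q : Sylow q G := hK'pg.toSylow hqK'
    obtain ⟨P₀⟩ : Nonempty (Sylow p ↥H) := inferInstance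
    set P' : Subgroup G := (P₀ : Subgroup ↥H).map H.subtype with hP'def
    have hP'le : P' ≤ H := Subgroup.map_subtype_le _
    have hP'pg : IsPGroup p P' := P₀.2.map H.subtype
    haveI : (P₀ : Subgroup ↥H).FiniteIndex := ⟨Subgroup.index_ne_zero_of_finite⟩
    have hP₀idx : ¬ p ∣ (P₀ : Subgroup ↥H).index := P₀.not_dvd_index
    have hP'sub : P'.subgroupOf H = (P₀ : Subgroup ↥H) :=
      Subgroup.comap_map_eq_self_of_injective (Subgroup.subtype_injective H) _
    have hP'idx : ¬ p ∣ P'.index := by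
      rw [← Subgroup.relIndex_mul_index hP'le]
      intro hdvd
      rcases hp.dvd_mul.mp hdvd with h | h
      · refine hP₀idx ?_
        rwa [show P'.relIndex H = (P'.subgroupOf H).index from rfl, hP'sub] at h
      · exact hind p hp h (by simp)
    let P : Sylow p G := hP'pg.toSylow hP'idx
    refine ⟨P, Q, ?_⟩
    show P' ≤ Subgroup.normalizer (K' : Set G)
    exact hP'le.trans (le_normalizer_map_of_normal hKn)
  · rintro ⟨P, Q, hPQ⟩
    have hQN : (Q : Subgroup G) ≤ Subgroup.normalizer ((Q : Subgroup G) : Set G) := Subgroup.le_normalizer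
    set H : Subgroup G := (P : Subgroup G) ⊔ (Q : Subgroup G) with hHdef
    have hHN : H ≤ Subgroup.normalizer ((Q : Subgroup G) : Set G) := sup_le hPQ hQN
    have hPH : (P : Subgroup G) ≤ H := le_sup_left
    have hQH : (Q : Subgroup G) ≤ H := le_sup_right
    haveI hQNnormal : (((Q : Subgroup G)).subgroupOf (Subgroup.normalizer ((Q : Subgroup G) : Set G))).Normal :=
      Subgroup.normal_in_normalizer
    have hsupOf : (P : Subgroup G).subgroupOf (Subgroup.normalizer ((Q : Subgroup G) : Set G)) ⊔
        (Q : Subgroup G).subgroupOf (Subgroup.normalizer ((Q : Subgroup G) : Set G)) =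
        H.subgroupOf (Subgroup.normalizer ((Q : Subgroup G) : Set G)) :=
      (Subgroup.subgroupOf_sup hPQ hQN).symm
    -- the relative index of Q in H
    have hd1 : (Q : Subgroup G).relIndex H =
        ((Q : Subgroup G).subgroupOf (Subgroup.normalizer ((Q : Subgroup G) : Set G))).relIndex
          ((P : Subgroup G).subgroupOf (Subgroup.normalizer ((Q : Subgroup G) : Set G))) := by
      rw [← Subgroup.relIndex_subgroupOf hHN, ← hsupOf, Subgroup.relIndex_sup_right]
    have hcardP : Nat.card (P : Subgroup G) = p ^ (Nat.card G).factorization p :=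
      P.card_eq_multiplicity
    have hcardQ : Nat.card (Q : Subgroup G) = q ^ (Nat.card G).factorization q :=
      Q.card_eq_multiplicity
    have hd_dvd : (Q : Subgroup G).relIndex H ∣ p ^ (Nat.card G).factorization p := by
      rw [hd1, ← hcardP]
      have h1 : (((Q : Subgroup G).subgroupOf (Subgroup.normalizer ((Q : Subgroup G) : Set G))).subgroupOf
          ((P : Subgroup G).subgroupOf (Subgroup.normalizer ((Q : Subgroup G) : Set G)))).index ∣
          Nat.card ((P : Subgroup G).subgroupOf (Subgroup.normalizer ((Q : Subgroup G) : Set G))) :=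
        Subgroup.index_dvd_card _
      have h2 : Nat.card ((P : Subgroup G).subgroupOf (Subgroup.normalizer ((Q : Subgroup G) : Set G))) =
          Nat.card (P : Subgroup G) :=
        Nat.card_congr (Subgroup.subgroupOfEquivOfLe hPQ).toEquiv
      exact h2 ▸ h1
    obtain ⟨i, hi, hdi⟩ := (Nat.dvd_prime_pow hp).mp hd_dvd
    have hcardQOf : Nat.card ((Q : Subgroup G).subgroupOf H) = Nat.card (Q : Subgroup G) :=
      Nat.card_congr (Subgroup.subgroupOfEquivOfLe hQH).toEquiv
    have hcardH : Nat.card H = Nat.card (Q : Subgroup G) * (Q : Subgroup G).relIndex H := by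
      rw [← Subgroup.card_mul_index ((Q : Subgroup G).subgroupOf H), hcardQOf]
      rfl
    refine ⟨H, ⟨?_, ?_⟩, (Q : Subgroup G).subgroupOf H, ?_, ?_, i, ?_⟩
    · intro r hr hrd
      rw [hcardH, hcardQ, hdi] at hrd
      rcases hr.dvd_mul.mp hrd with h | h
      · exact Or.inr ((Nat.prime_dvd_prime_iff_eq hr hq).mp (hr.dvd_of_dvd_pow h))
      · exact Or.inl ((Nat.prime_dvd_prime_iff_eq hr hp).mp (hr.dvd_of_dvd_pow h))
    · intro r hr hrd hrmem
      rcases hrmem with h | h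
      · subst h
        haveI : (P : Subgroup G).FiniteIndex := ⟨Subgroup.index_ne_zero_of_finite⟩
        exact P.not_dvd_index (hrd.trans (Subgroup.index_dvd_of_le hPH))
      · rcases h with rfl
        haveI : (Q : Subgroup G).FiniteIndex := ⟨Subgroup.index_ne_zero_of_finite⟩
        exact Q.not_dvd_index (hrd.trans (Subgroup.index_dvd_of_le hQH))
    · refine (Subgroup.normal_subgroupOf_iff hQH).mpr (fun x k hx hk => ?_)
      exact (Subgroup.mem_normalizer_iff.mp (hHN hk) x).mp hx
    · rw [hcardQOf, hcardQ]
      exact Nat.Coprime.pow_left _ (((Nat.coprime_primes hq hp).mpr (Ne.symm hpq)))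
    · show (Q : Subgroup G).relIndex H = p ^ i
      exact hdi
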